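/- Let Σ be a finite alphabet, L ⊆ Σ* a regular language, and M a minimal complete DFA recognizing L with finitely many states. If there exist three pairwise distinct states p, q, q' of M and words w, w' ∈ (Σ(q) ∩ Σ(q'))* such that δ(p,w) = q and δ(p,w') = q', then L is not piecewise testable. -/

import Mathlib

/-- A language over `α` is piecewise testable if it is a finite Boolean combination
(unions, intersections, complements) of "piece" languages
`Σ* a₁ Σ* a₂ Σ* ⋯ Σ* aₖ Σ* = {w | a₁⋯aₖ is a subsequence of w}`. -/
inductive PiecewiseTestable {α : Type*} : Set (List α) → Prop where
  | piece (l : List α) : PiecewiseTestable {w | l.Sublist w}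
  | compl {L : Set (List α)} : PiecewiseTestable L → PiecewiseTestable Lᶜ
  | union {K L : Set (List α)} :
      PiecewiseTestable K → PiecewiseTestable L → PiecewiseTestable (K ∪ L)
  | inter {K L : Set (List α)} :
      PiecewiseTestable K → PiecewiseTestable L → PiecewiseTestable (K ∩ L)


namespace PTAux

/-- `npow t n` is `t` repeated `n` times. -/
def npow {α : Type*} (t : List α) : ℕ → List α
  | 0 => []
  | n + 1 => t ++ npow t n

theorem npow_succ' {α : Type*} (t : List α) (n : ℕ) :
    npow t (n + 1) = npow t n ++ t := by
  induction n with
  | zero => simp [npow]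
  | succ n ih => simp only [npow] at *; rw [ih, ← List.append_assoc, ← ih, List.append_assoc]

theorem mem_npow {α : Type*} {t : List α} {a : α} {n : ℕ} (h : a ∈ npow t n) : a ∈ t := by
  induction n with
  | zero => simp [npow] at h
  | succ n ih =>
    simp only [npow, List.mem_append] at h
    rcases h with h | h
    · exact h
    · exact ih h

theorem npow_add {α : Type*} (t : List α) (m n : ℕ) :
    npow t (m + n) = npow t m ++ npow t n := by
  induction m with
  | zero => simp [npow]
  | succ m ih => simp only [Nat.succ_add, npow, ih, List.append_assoc]

theorem npow_mono {α : Type*} (t : List α) {k n : ℕ} (h : k ≤ n) :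
    (npow t k).Sublist (npow t n) := by
  obtain ⟨d, rfl⟩ := Nat.exists_eq_add_of_le h
  rw [npow_add]
  exact List.sublist_append_left _ _

theorem sublist_npow_length {α : Type*} {t s : List α} (h : ∀ a ∈ s, a ∈ t) :
    s.Sublist (npow t s.length) := by
  induction s with
  | nil => simp [npow]
  | cons a s ih =>
    have h1 : [a].Sublist t := List.singleton_sublist.mpr (h a (List.mem_cons_self))
    have h2 : s.Sublist (npow t s.length) := ih (fun b hb => h b (List.mem_cons_of_mem a hb))
    simpa [npow] using h1.append h2

theorem lemA {α : Type*} {t s : List α} {m n : ℕ} (h : s.Sublist (npow t m))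
    (hn : s.length ≤ n) : s.Sublist (npow t n) := by
  have hmem : ∀ a ∈ s, a ∈ t := fun a ha => mem_npow (h.subset ha)
  exact (sublist_npow_length hmem).trans (npow_mono t hn)

theorem evalFrom_loop {α σ : Type*} (M : DFA α σ) (s : σ) (r : List α)
    (h : ∀ a ∈ r, M.step s a = s) : M.evalFrom s r = s := by
  induction r with
  | nil => rfl
  | cons a r ih =>
    have : M.evalFrom s (a :: r) = M.evalFrom (M.step s a) r := rfl
    rw [this, h a List.mem_cons_self]
    exact ih (fun b hb => h b (List.mem_cons_of_mem a hb))

end PTAux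

/-- If in a minimal complete DFA there are three pairwise distinct states `p, q, q'`
and words `w, w'` over `Σ(q) ∩ Σ(q')` (letters self-looping on both `q` and `q'`)
with `δ(p,w) = q` and `δ(p,w') = q'`, then the language is not piecewise testable. -/
theorem stmt1 {α σ : Type*} [Fintype α] [Fintype σ] (M : DFA α σ)
    (hreach : ∀ q : σ, ∃ w : List α, M.evalFrom M.start w = q)
    (hdist : ∀ p q : σ, p ≠ q → ∃ z : List α,
      ¬ (M.evalFrom p z ∈ M.accept ↔ M.evalFrom q z ∈ M.accept))
    (p q q' : σ) (hpq : p ≠ q) (hpq' : p ≠ q') (hqq' : q ≠ q')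
    (w w' : List α)
    (hw : ∀ a ∈ w, M.step q a = q ∧ M.step q' a = q')
    (hw' : ∀ a ∈ w', M.step q a = q ∧ M.step q' a = q')
    (hwq : M.evalFrom p w = q) (hwq' : M.evalFrom p w' = q') :
    ¬ PiecewiseTestable (M.accepts : Set (List α)) := by

  classical
  intro hPT
  -- Every PT language has a "level" n: it cannot distinguish words with the same
  -- subsequences of length ≤ n.
  have key : ∀ K : Set (List α), PiecewiseTestable K → ∃ n : ℕ, ∀ x y : List α,
      (∀ s : List α, s.length ≤ n → (s.Sublist x ↔ s.Sublist y)) → (x ∈ K ↔ y ∈ K) := by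
    intro K hK
    induction hK with
    | piece l =>
      exact ⟨l.length, fun x y h => by
        simp only [Set.mem_setOf_eq]; exact h l le_rfl⟩
    | compl _ ih =>
      obtain ⟨n, hn⟩ := ih
      exact ⟨n, fun x y h => by simp only [Set.mem_compl_iff, hn x y h]⟩
    | union _ _ ih1 ih2 =>
      obtain ⟨n1, h1⟩ := ih1
      obtain ⟨n2, h2⟩ := ih2
      refine ⟨max n1 n2, fun x y h => ?_⟩
      have e1 := h1 x y (fun s hs => h s (hs.trans (le_max_left _ _)))
      have e2 := h2 x y (fun s hs => h s (hs.trans (le_max_right _ _)))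
      simp only [Set.mem_union, e1, e2]
    | inter _ _ ih1 ih2 =>
      obtain ⟨n1, h1⟩ := ih1
      obtain ⟨n2, h2⟩ := ih2
      refine ⟨max n1 n2, fun x y h => ?_⟩
      have e1 := h1 x y (fun s hs => h s (hs.trans (le_max_left _ _)))
      have e2 := h2 x y (fun s hs => h s (hs.trans (le_max_right _ _)))
      simp only [Set.mem_inter_iff, e1, e2]
  obtain ⟨n, hn⟩ := key _ hPT
  obtain ⟨u, hu⟩ := hreach p
  obtain ⟨z, hz⟩ := hdist q q' hqq'
  set t : List α := w ++ w' with ht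
  set X : List α := PTAux.npow t n ++ w with hX
  set Y : List α := w' ++ PTAux.npow t n with hY
  -- letters of t loop on q and on q'
  have loopq : ∀ a ∈ t, M.step q a = q := by
    intro a ha
    rcases List.mem_append.mp ha with h | h
    · exact (hw a h).1
    · exact (hw' a h).1
  have loopq' : ∀ a ∈ t, M.step q' a = q' := by
    intro a ha
    rcases List.mem_append.mp ha with h | h
    · exact (hw a h).2
    · exact (hw' a h).2
  -- evaluation facts
  have hevalX : M.evalFrom p X = q := by
    cases n with
    | zero => simpa [hX, PTAux.npow] using hwq
    | succ m =>
      have hx : X = w ++ (w' ++ (PTAux.npow t m ++ w)) := by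
        simp [hX, PTAux.npow, ht, List.append_assoc]
      rw [hx, DFA.evalFrom_of_append, hwq]
      apply PTAux.evalFrom_loop
      intro a ha
      rcases List.mem_append.mp ha with h | h
      · exact (hw' a h).1
      · rcases List.mem_append.mp h with h2 | h2
        · exact loopq a (PTAux.mem_npow h2)
        · exact (hw a h2).1
  have hevalY : M.evalFrom p Y = q' := by
    rw [hY, DFA.evalFrom_of_append, hwq']
    exact PTAux.evalFrom_loop M q' _ (fun a ha => loopq' a (PTAux.mem_npow ha))
  -- middle equivalence of subsequences
  have mid : ∀ s : List α, s.length ≤ n → (s.Sublist X ↔ s.Sublist Y) := by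
    intro s hs
    constructor
    · intro h
      have h1 : s.Sublist (PTAux.npow t (n + 1)) := by
        refine h.trans ?_
        rw [PTAux.npow_succ', ht]
        exact (List.Sublist.refl _).append (List.sublist_append_left w w')
      have h2 : s.Sublist (PTAux.npow t n) := PTAux.lemA h1 hs
      exact h2.trans (List.sublist_append_right w' _)
    · intro h
      have h1 : s.Sublist (PTAux.npow t (n + 1)) := by
        refine h.trans ?_
        show (w' ++ PTAux.npow t n).Sublist (t ++ PTAux.npow t n)
        exact (List.sublist_append_right w w').append (List.Sublist.refl _)
      have h2 : s.Sublist (PTAux.npow t n) := PTAux.lemA h1 hs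
      exact h2.trans (List.sublist_append_left _ w)
  -- full-word equivalence
  have outer : ∀ s : List α, s.length ≤ n →
      (s.Sublist (u ++ (X ++ z)) ↔ s.Sublist (u ++ (Y ++ z))) := by
    intro s hs
    constructor
    · intro h
      obtain ⟨s1, s2, rfl, hs1, hs2⟩ := List.sublist_append_iff.mp h
      obtain ⟨s2a, s2b, rfl, hs2a, hs2b⟩ := List.sublist_append_iff.mp hs2
      have hlen : s2a.length ≤ n := by
        refine le_trans ?_ hs
        simp [List.length_append]
        omega
      exact hs1.append (((mid s2a hlen).mp hs2a).append hs2b)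
    · intro h
      obtain ⟨s1, s2, rfl, hs1, hs2⟩ := List.sublist_append_iff.mp h
      obtain ⟨s2a, s2b, rfl, hs2a, hs2b⟩ := List.sublist_append_iff.mp hs2
      have hlen : s2a.length ≤ n := by
        refine le_trans ?_ hs
        simp [List.length_append]
        omega
      exact hs1.append (((mid s2a hlen).mpr hs2a).append hs2b)
  have hmem := hn (u ++ (X ++ z)) (u ++ (Y ++ z)) outer
  change (M.eval (u ++ (X ++ z)) ∈ M.accept ↔ M.eval (u ++ (Y ++ z)) ∈ M.accept) at hmem
  simp only [DFA.eval, DFA.evalFrom_of_append, hu, hevalX, hevalY] at hmem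
  exact hz hmem
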